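/- Let f : ℝ_+^k → int(ℝ_+^k) be a concave mapping with respect to the cone order. Then f is a standard interference mapping: it is monotonic (x ≤ y ⟹ f(x) ≤ f(y)) and scalable (for every x ∈ ℝ_+^k and λ > 1, f(λx) ≪ λ f(x), where ≪ denotes strict coordinatewise inequality). -/

import Mathlib

open Filter Topology Set

noncomputable def Mratio {k : ℕ} (x y : Fin k → ℝ) : ℝ :=
  sInf {β : ℝ | 0 < β ∧ ∀ i, x i ≤ β * y i}

noncomputable def dT {k : ℕ} (x y : Fin k → ℝ) : ℝ :=
  Real.log (max (Mratio x y) (Mratio y x))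

def posOrth (k : ℕ) : Set (Fin k → ℝ) := {x | ∀ i, 0 < x i}

def nonnegOrth (k : ℕ) : Set (Fin k → ℝ) := {x | ∀ i, 0 ≤ x i}

/-- Fact 3: a positive concave mapping is a standard interference
mapping: monotone and scalable. -/
theorem stmt10 {k : ℕ} (f : (Fin k → ℝ) → (Fin k → ℝ))
    (hpos : ∀ x ∈ nonnegOrth k, f x ∈ posOrth k)
    (hconc : ∀ x ∈ nonnegOrth k, ∀ y ∈ nonnegOrth k, ∀ t : ℝ, 0 < t → t < 1 →
      t • f x + (1 - t) • f y ≤ f (t • x + (1 - t) • y)) :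
    (∀ x ∈ nonnegOrth k, ∀ y ∈ nonnegOrth k, x ≤ y → f x ≤ f y) ∧
    (∀ x ∈ nonnegOrth k, ∀ l : ℝ, 1 < l → ∀ i, f (l • x) i < l * f x i) := by
  constructor
  · intro x hx y hy hxy
    -- key: for all t ∈ (0,1), f y ≥ (1-t) • f x coordinatewise
    have key : ∀ t : ℝ, 0 < t → t < 1 → ∀ i, (1 - t) * f x i ≤ f y i := by
      intro t ht ht1 i
      set z : Fin k → ℝ := x + t⁻¹ • (y - x) with hz
      have hzmem : z ∈ nonnegOrth k := by
        intro j
        have : 0 ≤ y j - x j := sub_nonneg.mpr (hxy j)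
        have := mul_nonneg (le_of_lt (inv_pos.mpr ht)) this
        simp only [hz, Pi.add_apply, Pi.smul_apply, Pi.sub_apply, smul_eq_mul]
        have := hx j
        linarith
      have heq : t • z + (1 - t) • x = y := by
        funext j
        simp only [hz, Pi.add_apply, Pi.smul_apply, Pi.sub_apply, smul_eq_mul]
        field_simp
        ring
      have h := hconc z hzmem x hx t ht ht1
      rw [heq] at h
      have hi := h i
      simp only [Pi.add_apply, Pi.smul_apply, smul_eq_mul] at hi
      have hfz := (hpos z hzmem i).le
      nlinarith
    intro i
    by_contra hlt
    push_neg at hlt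
    have hfx : 0 < f x i := hpos x hx i
    have hfy : 0 < f y i := hpos y hy i
    set t : ℝ := (f x i - f y i) / (2 * f x i) with htdef
    have ht : 0 < t := div_pos (by linarith) (by linarith)
    have ht1 : t < 1 := by
      rw [div_lt_one (by linarith)]; linarith
    have hk := key t ht ht1 i
    have : (1 - t) * f x i = (f x i + f y i) / 2 := by
      rw [htdef]; field_simp; ring
    linarith
  · intro x hx l hl i
    have hx0 : (0 : Fin k → ℝ) ∈ nonnegOrth k := fun j => le_refl 0
    have hlx : l • x ∈ nonnegOrth k := fun j => by
      have := hx j; simpa using mul_nonneg (by linarith : (0:ℝ) ≤ l) this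
    have ht : (0:ℝ) < l⁻¹ := inv_pos.mpr (by linarith)
    have ht1 : l⁻¹ < 1 := by
      rw [inv_lt_one_iff₀]; right; exact hl
    have heq : l⁻¹ • (l • x) + (1 - l⁻¹) • (0 : Fin k → ℝ) = x := by
      funext j
      simp only [Pi.add_apply, Pi.smul_apply, Pi.zero_apply, smul_eq_mul, mul_zero, add_zero]
      field_simp
    have h := hconc (l • x) hlx 0 hx0 l⁻¹ ht ht1
    rw [heq] at h
    have hi := h i
    simp only [Pi.add_apply, Pi.smul_apply, Pi.zero_apply, smul_eq_mul] at hi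
    have hf0 : 0 < f 0 i := hpos 0 hx0 i
    have hl0 : (0:ℝ) < l := by linarith
    have h2 := mul_le_mul_of_nonneg_left hi hl0.le
    have h3 : l * (l⁻¹ * f (l • x) i + (1 - l⁻¹) * f 0 i)
        = f (l • x) i + (l - 1) * f 0 i := by
      field_simp
    rw [h3] at h2
    nlinarith
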